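/- Let p be a prime number, let A be an integral domain of characteristic p that is finitely generated as an algebra over 𝔽_p, let B be a finitely generated 𝔽_p-algebra, and let φ : B → A be a ring homomorphism. Then the following are equivalent: (1) there exists a natural number m ≥ 1 with frob_A^m ∘ φ = φ, where frob_A : A → A is the Frobenius homomorphism a ↦ a^p; (2) the induced map PrimeSpectrum.comap φ : PrimeSpectrum A → PrimeSpectrum B is a constant map. -/

import Mathlib

/-- For `A` an integral domain of characteristic `p`, finitely generated over
`𝔽_p`, `B` a finitely generated `𝔽_p`-algebra and `φ : B →+* A`: there exists `m ≥ 1` with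
`frob_A^m ∘ φ = φ` if and only if the induced map on prime spectra is constant. -/
theorem exists_frobenius_fix_iff_comap_constant
    (p : ℕ) [Fact p.Prime]
    (A B : Type*) [CommRing A] [IsDomain A] [CharP A p]
    [Algebra (ZMod p) A] [Algebra.FiniteType (ZMod p) A]
    [CommRing B] [Algebra (ZMod p) B] [Algebra.FiniteType (ZMod p) B]
    (φ : B →+* A) :
    (∃ m : ℕ, 1 ≤ m ∧ (iterateFrobenius A p m).comp φ = φ) ↔
      (∃ c : PrimeSpectrum B, ∀ q : PrimeSpectrum A, PrimeSpectrum.comap φ q = c) := by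
  have hp : p.Prime := Fact.out
  constructor
  · rintro ⟨m, hm, hcomp⟩
    refine ⟨⟨RingHom.ker φ, RingHom.ker_isPrime φ⟩, fun q => ?_⟩
    ext b
    simp only [PrimeSpectrum.comap_asIdeal, Ideal.mem_comap, RingHom.mem_ker]
    constructor
    · intro hb
      by_contra hne
      have hfix : φ b ^ p ^ m = φ b := by
        have := congrArg (fun ψ => ψ b) hcomp
        simpa [iterateFrobenius_def] using this
      have hk2 : 2 ≤ p ^ m := by
        calc 2 ≤ p := hp.two_le
        _ = p ^ 1 := (pow_one p).symm
        _ ≤ p ^ m := Nat.pow_le_pow_right hp.pos hm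
      have h1 : φ b ^ (p ^ m - 1) * φ b = φ b := by
        rw [← pow_succ, Nat.sub_add_cancel (by omega)]
        exact hfix
      have h2 : φ b ^ (p ^ m - 1) = 1 := by
        have := mul_right_cancel₀ hne (h1.trans (one_mul (φ b)).symm)
        exact this
      have h3 : (1 : A) ∈ q.asIdeal := by
        rw [← h2]
        have : p ^ m - 1 = (p ^ m - 2) + 1 := by omega
        rw [this, pow_succ]
        exact Ideal.mul_mem_left _ _ hb
      exact q.isPrime.ne_top (q.asIdeal.eq_top_iff_one.mpr h3)
    · intro hb
      rw [hb]; exact q.asIdeal.zero_mem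
  · rintro ⟨c, hc⟩
    -- all primes of A pull back to ker φ
    have hker : ∀ q : PrimeSpectrum A, Ideal.comap φ q.asIdeal = RingHom.ker φ := by
      intro q
      have h0 := hc ⟨⊥, Ideal.bot_prime⟩
      have hq := hc q
      have : Ideal.comap φ q.asIdeal = Ideal.comap φ ⊥ := by
        have := hq.trans h0.symm
        exact congrArg PrimeSpectrum.asIdeal this
      rw [this]
      ext b
      simp [Ideal.mem_comap, RingHom.mem_ker]
    -- pick a maximal ideal of A
    obtain ⟨𝔪, h𝔪⟩ := Ideal.exists_maximal A
    letI : Field (A ⧸ 𝔪) := Ideal.Quotient.field 𝔪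
    haveI : CharP (A ⧸ 𝔪) p :=
      charP_of_injective_ringHom (algebraMap (ZMod p) (A ⧸ 𝔪)).injective p
    haveI : Algebra.FiniteType (ZMod p) (A ⧸ 𝔪) :=
      Algebra.FiniteType.of_surjective (Ideal.Quotient.mkₐ (ZMod p) 𝔪)
        (Ideal.Quotient.mkₐ_surjective (ZMod p) 𝔪)
    haveI : Module.Finite (ZMod p) (A ⧸ 𝔪) :=
      finite_of_finite_type_of_isJacobsonRing (ZMod p) (A ⧸ 𝔪)
    haveI : Finite (A ⧸ 𝔪) := Module.finite_of_finite (ZMod p)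
    haveI : Fintype (A ⧸ 𝔪) := Fintype.ofFinite _
    obtain ⟨m', -, hcard⟩ := FiniteField.card (A ⧸ 𝔪) p
    obtain ⟨m, hm1⟩ : ∃ m : ℕ, m = (m' : ℕ) := ⟨m', rfl⟩
    rw [← hm1] at hcard
    refine ⟨m, by rw [hm1]; exact m'.one_le, ?_⟩
    ext b
    simp only [RingHom.coe_comp, Function.comp_apply, iterateFrobenius_def]
    -- φ b ^ (p ^ m) - φ b lies in 𝔪, hence b ^ (p^m) - b ∈ comap φ 𝔪 = ker φ
    have hmem : φ (b ^ p ^ m - b) ∈ 𝔪 := by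
      rw [← Ideal.Quotient.eq_zero_iff_mem]
      have : (Ideal.Quotient.mk 𝔪) (φ b) ^ p ^ m = (Ideal.Quotient.mk 𝔪) (φ b) := by
        rw [← hcard]
        exact FiniteField.pow_card _
      simp only [map_sub, map_pow]
      rw [this, sub_self]
    have : b ^ p ^ m - b ∈ Ideal.comap φ 𝔪 := hmem
    rw [hker ⟨𝔪, h𝔪.isPrime⟩, RingHom.mem_ker, map_sub, map_pow, sub_eq_zero] at this
    exact this
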